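/- Let F ⊆ ℝ^q be a nonempty compact convex set with 0 ∈ int F, Ω ⊆ ℝ^q a nonempty closed convex set, and x̄ a point with ρ_F^Ω(x̄) < ∞. If v ∈ ∂ρ_F^Ω(x̄) and ω̄ ∈ Ω satisfies ρ_F^Ω(x̄) = ρ_F(x̄ − ω̄), then v ∈ ∂ρ_F(x̄ − ω̄); i.e., ∂ρ_F^Ω(x̄) ⊆ ∂ρ_F(x̄ − ω̄) for any generalized projection point ω̄. -/

import Mathlib

open scoped Pointwise

/-- Real-valued Minkowski gauge. -/
noncomputable def rhoR {q : ℕ} (F : Set (EuclideanSpace ℝ (Fin q)))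
    (y : EuclideanSpace ℝ (Fin q)) : ℝ :=
  sInf {t : ℝ | 0 ≤ t ∧ y ∈ t • F}

/-- Real-valued set-based Minkowski gauge. -/
noncomputable def rhoSR {q : ℕ} (F Ω : Set (EuclideanSpace ℝ (Fin q)))
    (x : EuclideanSpace ℝ (Fin q)) : ℝ :=
  sInf {t : ℝ | 0 ≤ t ∧ x ∈ Ω + t • F}

/-- Convex subdifferential of a real-valued function at a point. -/
def subdiffAt {q : ℕ} (f : EuclideanSpace ℝ (Fin q) → ℝ)
    (x₀ : EuclideanSpace ℝ (Fin q)) : Set (EuclideanSpace ℝ (Fin q)) :=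
  {v | ∀ x, (inner ℝ v (x - x₀) : ℝ) ≤ f x - f x₀}

theorem stmt4 {q : ℕ} (F Ω : Set (EuclideanSpace ℝ (Fin q)))
    (hFne : F.Nonempty) (hFcpt : IsCompact F) (hFconv : Convex ℝ F)
    (h0 : (0 : EuclideanSpace ℝ (Fin q)) ∈ interior F)
    (hΩne : Ω.Nonempty) (hΩcl : IsClosed Ω) (hΩconv : Convex ℝ Ω)
    (xb ωb v : EuclideanSpace ℝ (Fin q))
    (hfin : {t : ℝ | 0 ≤ t ∧ xb ∈ Ω + t • F}.Nonempty)
    (hωb : ωb ∈ Ω) (hproj : rhoSR F Ω xb = rhoR F (xb - ωb))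
    (hv : v ∈ subdiffAt (rhoSR F Ω) xb) :
    v ∈ subdiffAt (rhoR F) (xb - ωb) := by
  -- there is ε > 0 with ball 0 ε ⊆ F
  obtain ⟨ε, hε, hball⟩ := Metric.isOpen_iff.mp isOpen_interior 0 h0
  replace hball : Metric.ball (0 : EuclideanSpace ℝ (Fin q)) ε ⊆ F :=
    hball.trans interior_subset
  -- for any y, the gauge-set is nonempty
  have hne : ∀ y : EuclideanSpace ℝ (Fin q),
      {t : ℝ | 0 ≤ t ∧ y ∈ t • F}.Nonempty := by
    intro y
    refine ⟨‖y‖ / ε + 1, ?_, ?_⟩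
    · positivity
    · have ht : (0 : ℝ) < ‖y‖ / ε + 1 := by positivity
      refine ⟨(‖y‖ / ε + 1)⁻¹ • y, hball ?_, ?_⟩
      · simp only [Metric.mem_ball, dist_zero_right, norm_smul, Real.norm_eq_abs,
          abs_of_pos (inv_pos.mpr ht)]
        rw [inv_mul_lt_iff₀ ht]
        have : (‖y‖ / ε + 1) * ε = ‖y‖ + ε := by field_simp
        linarith
      · dsimp only
        rw [smul_smul, mul_inv_cancel₀ ht.ne', one_smul]
  -- key inequality : rhoSR F Ω (x + ωb) ≤ rhoR F x
  have key : ∀ x : EuclideanSpace ℝ (Fin q), rhoSR F Ω (x + ωb) ≤ rhoR F x := by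
    intro x
    refine csInf_le_csInf ⟨0, fun t ht => ht.1⟩ (hne x) ?_
    rintro t ⟨ht0, htF⟩
    refine ⟨ht0, ?_⟩
    rw [add_comm x ωb]
    exact Set.add_mem_add hωb htF
  intro x
  have h := hv (x + ωb)
  have hx : x + ωb - xb = x - (xb - ωb) := by abel
  rw [hx] at h
  calc (inner ℝ v (x - (xb - ωb)) : ℝ) ≤ rhoSR F Ω (x + ωb) - rhoSR F Ω xb := h
    _ ≤ rhoR F x - rhoR F (xb - ωb) := by
        rw [hproj]; exact sub_le_sub_right (key x) _
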